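/- If H is an equationally Artinian group and k is a natural number, then the direct power H^k (the group Fin k → H with pointwise multiplication) is equationally Artinian. -/
import Mathlib


/-- The Diophantine radical `Rad_H(E)` of a subset `E ⊆ Hⁿ` (coefficients from `H` itself). -/
def RadH (H : Type*) [Group H] {n : ℕ} (E : Set (Fin n → H)) :
    Set (Monoid.Coprod H (FreeGroup (Fin n))) :=
  {w | ∀ e ∈ E, Monoid.Coprod.lift (MonoidHom.id H) (FreeGroup.lift e) w = 1}

/-- A group is equationally Artinian (Diophantine sense). -/
def EquationallyArtinian (H : Type*) [Group H] : Prop :=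
  ∀ (n : ℕ) (E : Set (Fin n → H)), ∃ E₀ ⊆ E, E₀.Finite ∧ RadH H E₀ = RadH H E

/-- Radicals are antitone. -/
lemma RadH_antitone {H : Type*} [Group H] {n : ℕ} {E F : Set (Fin n → H)}
    (h : E ⊆ F) : RadH H F ⊆ RadH H E :=
  fun _ hw e he => hw e (h he)

lemma exists_finite_preimage {α β : Type*} {f : α → β} {E : Set α} {T : Set β}
    (hT : T.Finite) (h : T ⊆ f '' E) : ∃ S ⊆ E, S.Finite ∧ f '' S = T := by
  have h' : ∀ x ∈ T, ∃ e ∈ E, f e = x := fun x hx => h hx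
  choose g hgE hgf using h'
  refine ⟨{y | ∃ x, ∃ hx : x ∈ T, g x hx = y}, ?_, hT.dependent_image g, ?_⟩
  · rintro y ⟨x, hx, rfl⟩
    exact hgE x hx
  · ext z
    constructor
    · rintro ⟨y, ⟨x, hx, rfl⟩, rfl⟩
      rw [hgf x hx]; exact hx
    · intro hz
      exact ⟨g z hz, ⟨z, hz, rfl⟩, hgf z hz⟩

/-- Key compatibility: evaluating the lift over `H^k` at coordinate `i` equals the lift
over `H` of the coordinate-wise data, applied to the image word. -/
lemma lift_apply_coord {H : Type*} [Group H] {k n : ℕ}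
    (e : Fin n → (Fin k → H)) (i : Fin k) (w : Monoid.Coprod (Fin k → H) (FreeGroup (Fin n))) :
    (Monoid.Coprod.lift (MonoidHom.id (Fin k → H)) (FreeGroup.lift e) w) i =
      Monoid.Coprod.lift (MonoidHom.id H) (FreeGroup.lift (fun j => e j i))
        (Monoid.Coprod.map (Pi.evalMonoidHom (fun _ : Fin k => H) i)
          (MonoidHom.id (FreeGroup (Fin n))) w) := by
  have : (Pi.evalMonoidHom (fun _ : Fin k => H) i).comp
      (Monoid.Coprod.lift (MonoidHom.id (Fin k → H)) (FreeGroup.lift e)) =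
      (Monoid.Coprod.lift (MonoidHom.id H) (FreeGroup.lift (fun j => e j i))).comp
        (Monoid.Coprod.map (Pi.evalMonoidHom (fun _ : Fin k => H) i)
          (MonoidHom.id (FreeGroup (Fin n)))) := by
    apply Monoid.Coprod.hom_ext
    · ext x
      simp [Monoid.Coprod.map_apply_inl]
    · ext j
      simp [Monoid.Coprod.map_apply_inr]
  exact DFunLike.congr_fun this w

/-- Membership in the radical over `H^k` in terms of coordinate radicals over `H`. -/
lemma mem_radH_pow_iff {H : Type*} [Group H] {k n : ℕ} (S : Set (Fin n → (Fin k → H)))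
    (w : Monoid.Coprod (Fin k → H) (FreeGroup (Fin n))) :
    w ∈ RadH (Fin k → H) S ↔ ∀ i : Fin k,
      Monoid.Coprod.map (Pi.evalMonoidHom (fun _ : Fin k => H) i)
        (MonoidHom.id (FreeGroup (Fin n))) w ∈
        RadH H ((fun e => fun j => e j i) '' S) := by
  constructor
  · intro hw i x hx
    obtain ⟨e, he, rfl⟩ := hx
    rw [← lift_apply_coord, hw e he, Pi.one_apply]
  · intro hw e he
    funext i
    rw [Pi.one_apply, lift_apply_coord]
    exact hw i _ ⟨e, he, rfl⟩

/-- A finite direct power of an equationally Artinian group is equationally Artinian. -/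
theorem pow_equationallyArtinian {H : Type*} [Group H]
    (hH : EquationallyArtinian H) (k : ℕ) :
    EquationallyArtinian (Fin k → H) := by
  intro n E
  -- coordinate projections of E
  set f : Fin k → (Fin n → (Fin k → H)) → (Fin n → H) := fun i e j => e j i with hf
  -- for each coordinate, get a finite subset of the projection with equal radical
  have h1 : ∀ i : Fin k, ∃ T ⊆ f i '' E, T.Finite ∧ RadH H T = RadH H (f i '' E) :=
    fun i => hH n (f i '' E)
  choose T hTsub hTfin hTrad using h1
  -- lift each T i to a finite subset of E
  have h2 : ∀ i : Fin k, ∃ S ⊆ E, S.Finite ∧ f i '' S = T i :=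
    fun i => exists_finite_preimage (hTfin i) (hTsub i)
  choose S hSsub hSfin hSimg using h2
  refine ⟨⋃ i, S i, Set.iUnion_subset hSsub, Set.finite_iUnion hSfin, ?_⟩
  have key : ∀ i : Fin k, RadH H (f i '' ⋃ j, S j) = RadH H (f i '' E) := by
    intro i
    apply Set.Subset.antisymm
    · rw [← hTrad i, ← hSimg i]
      exact RadH_antitone (Set.image_mono (Set.subset_iUnion S i))
    · exact RadH_antitone (Set.image_mono (Set.iUnion_subset hSsub))
  ext w
  rw [mem_radH_pow_iff, mem_radH_pow_iff]
  exact forall_congr' fun i => by rw [key i]
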